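/- Let φ : X → Y be a measurable mapping between σ-finite measure spaces, 1 < p < ∞ and 1 ≤ q, s ≤ ∞. Then f ∘ φ ∈ L_{p,q}(X) for every f ∈ L_{p,s}(Y) with ‖f ∘ φ‖_{p,q} ≤ K‖f‖_{p,s}, s ≤ q, for some constant K < ∞, if and only if μ(φ⁻¹(B)) ≤ K^p ν(B) for every measurable set B ∈ 𝓑. -/

import Mathlib

open MeasureTheory Set ENNReal NNReal

/-- Distribution function `μ{x : |f(x)| > λ}` of a complex-valued function. -/
noncomputable def distribFn {X : Type*} [MeasurableSpace X] (μ : Measure X)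
    (f : X → ℂ) (lam : ℝ) : ℝ≥0∞ :=
  μ {x | lam < ‖f x‖}

/-- The Lorentz `(p,q)`-norm, `1 < p < ∞`, `1 ≤ q ≤ ∞`, computed via the
distribution function. -/
noncomputable def lorentzNorm {X : Type*} [MeasurableSpace X] (μ : Measure X)
    (p : ℝ) (q : ℝ≥0∞) (f : X → ℂ) : ℝ≥0∞ :=
  if q = ∞ then ⨆ lam ∈ Set.Ioi (0 : ℝ), ENNReal.ofReal lam * (distribFn μ f lam) ^ (1 / p)
  else (q * ∫⁻ lam in Set.Ioi (0 : ℝ),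
      (ENNReal.ofReal lam * (distribFn μ f lam) ^ (1 / p)) ^ q.toReal /
        ENNReal.ofReal lam) ^ (1 / q.toReal)

/-- Membership in the Lorentz space `L_{p,q}`. -/
def MemLorentz {X : Type*} [MeasurableSpace X] (μ : Measure X)
    (p : ℝ) (q : ℝ≥0∞) (f : X → ℂ) : Prop :=
  Measurable f ∧ lorentzNorm μ p q f < ∞

section aux

lemma lint_rpow (r a : ℝ) (hr : 1 ≤ r) (ha : 0 < a) :
    ∫⁻ t in Ioo (0:ℝ) a, ENNReal.ofReal (t ^ (r-1)) = ENNReal.ofReal (a ^ r / r) := by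
  have hint : IntervalIntegrable (fun t : ℝ => t ^ (r-1)) volume 0 a :=
    intervalIntegral.intervalIntegrable_rpow' (by linarith)
  rw [← ofReal_integral_eq_lintegral_ofReal]
  · congr 1
    rw [← MeasureTheory.integral_Ioc_eq_integral_Ioo, ← intervalIntegral.integral_of_le ha.le,
      integral_rpow (Or.inl (by linarith))]
    rw [sub_add_cancel, Real.zero_rpow (by linarith), sub_zero]
  · exact (intervalIntegrable_iff_integrableOn_Ioo_of_le ha.le).mp hint
  · filter_upwards [ae_restrict_mem measurableSet_Ioo] with t ht
    exact Real.rpow_nonneg ht.1.le _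

lemma ofReal_rpow_div (r t : ℝ) (ht : 0 < t) :
    (ENNReal.ofReal t) ^ r / ENNReal.ofReal t = ENNReal.ofReal (t ^ (r-1)) := by
  rw [ENNReal.ofReal_rpow_of_pos ht, ← ENNReal.ofReal_div_of_pos ht,
    Real.rpow_sub ht, Real.rpow_one]

variable {X : Type*} [MeasurableSpace X] {μ : Measure X}

lemma distribFn_anti (f : X → ℂ) {a b : ℝ} (hab : a ≤ b) :
    distribFn μ f b ≤ distribFn μ f a :=
  measure_mono fun x hx => lt_of_le_of_lt hab hx

lemma distribFn_indicator (A : Set X) {lam : ℝ} (hlam : 0 < lam) :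
    distribFn μ (A.indicator fun _ => (1:ℂ)) lam = if lam < 1 then μ A else 0 := by
  unfold distribFn
  split_ifs with h
  · congr 1
    ext x
    by_cases hx : x ∈ A <;> simp [indicator_apply, hx, h, hlam.le, not_lt.2 hlam.le]
  · convert measure_empty (μ := μ)
    ext x
    by_cases hx : x ∈ A <;> simp [indicator_apply, hx, not_lt.2 (not_lt.1 h), hlam, not_lt.2 hlam.le]

lemma lorentzNorm_indicator {p : ℝ} (hp : 0 < p) {q : ℝ≥0∞} (hq : 1 ≤ q) (A : Set X) :
    lorentzNorm μ p q (A.indicator fun _ => (1:ℂ)) = (μ A) ^ (1/p) := by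
  have hp' : (1:ℝ)/p ≠ 0 := by positivity
  unfold lorentzNorm
  split_ifs with hqt
  · apply le_antisymm
    · refine iSup₂_le fun lam hlam => ?_
      rw [distribFn_indicator A hlam]
      split_ifs with h
      · calc ENNReal.ofReal lam * μ A ^ (1/p) ≤ 1 * μ A ^ (1/p) := by
              gcongr
              exact ENNReal.ofReal_le_one.2 h.le
          _ = μ A ^ (1/p) := one_mul _
      · rw [ENNReal.zero_rpow_of_pos (by positivity : (0:ℝ) < 1/p), mul_zero]
        exact zero_le
    · refine ENNReal.le_of_forall_lt_one_mul_le fun a ha => ?_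
      rcases eq_or_ne a 0 with rfl | ha0
      · simp
      have hat : a ≠ ∞ := (ha.trans_le le_top).ne
      have h1 : 0 < a.toReal := ENNReal.toReal_pos ha0 hat
      have h2 : a.toReal < 1 := by
        rw [← ENNReal.toReal_one]
        exact ENNReal.toReal_strict_mono one_ne_top ha
      have := le_iSup₂ (f := fun lam (_ : lam ∈ Ioi (0:ℝ)) =>
        ENNReal.ofReal lam * (distribFn μ (A.indicator fun _ => (1:ℂ)) lam) ^ (1/p))
        a.toReal h1
      rw [distribFn_indicator A h1, if_pos h2, ENNReal.ofReal_toReal hat] at this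
      exact this
  · have hq0 : q ≠ 0 := by intro h; rw [h] at hq; exact (not_le.2 zero_lt_one) hq
    have hq1 : (1:ℝ) ≤ q.toReal := by
      rw [← ENNReal.toReal_one]
      exact ENNReal.toReal_mono hqt hq
    have hqr : 0 < q.toReal := by linarith
    have hsplit : (Ioi (0:ℝ)) = Ioo 0 1 ∪ Ici 1 := by
      ext x; simp [Ioo, Ici, Ioi]
      constructor
      · intro h; by_cases h1 : x < 1
        · exact Or.inl ⟨h, h1⟩
        · exact Or.inr (not_lt.1 h1)
      · rintro (⟨h, _⟩ | h) <;> linarith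
    rw [hsplit, lintegral_union measurableSet_Ici (by
      rw [Set.disjoint_left]
      rintro x ⟨_, h1⟩ h2
      exact absurd h2 (not_le.2 h1))]
    have h2 : ∫⁻ lam in Ici (1:ℝ),
        (ENNReal.ofReal lam * (distribFn μ (A.indicator fun _ => (1:ℂ)) lam) ^ (1/p)) ^ q.toReal /
          ENNReal.ofReal lam = 0 := by
      rw [setLIntegral_congr_fun measurableSet_Ici (fun lam hlam => ?_), lintegral_zero]
      rw [distribFn_indicator A (by linarith [mem_Ici.1 hlam] : (0:ℝ) < lam),
        if_neg (not_lt.2 hlam)]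
      rw [ENNReal.zero_rpow_of_pos (by positivity : (0:ℝ) < 1/p), mul_zero,
        ENNReal.zero_rpow_of_pos hqr, ENNReal.zero_div]
    have h1 : ∫⁻ lam in Ioo (0:ℝ) 1,
        (ENNReal.ofReal lam * (distribFn μ (A.indicator fun _ => (1:ℂ)) lam) ^ (1/p)) ^ q.toReal /
          ENNReal.ofReal lam
        = (μ A) ^ (q.toReal/p) * ENNReal.ofReal (1/q.toReal) := by
      rw [setLIntegral_congr_fun measurableSet_Ioo (fun lam hlam => ?_)]
      · rw [lintegral_const_mul _ ((Real.continuous_rpow_const (by linarith : (0:ℝ) ≤ q.toReal - 1)).measurable.ennreal_ofReal)]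
        have := lint_rpow q.toReal 1 hq1 one_pos
        rw [Real.one_rpow] at this
        rw [this]
      · show _ = (μ A) ^ (q.toReal/p) * ENNReal.ofReal (lam ^ (q.toReal - 1))
        rw [distribFn_indicator A hlam.1, if_pos hlam.2,
          ENNReal.mul_rpow_of_nonneg _ _ hqr.le, ← ENNReal.rpow_mul,
          mul_comm ((ENNReal.ofReal lam) ^ q.toReal), mul_div_assoc,
          ofReal_rpow_div _ _ hlam.1, one_div, inv_mul_eq_div]
    rw [h1, h2, add_zero, mul_left_comm,
      show q * ENNReal.ofReal (1/q.toReal) = 1 by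
        rw [ENNReal.ofReal_div_of_pos hqr, ENNReal.ofReal_one, ENNReal.ofReal_toReal hqt,
          mul_one_div, ENNReal.div_self hq0 hqt],
      mul_one, ← ENNReal.rpow_mul, div_mul_eq_mul_div, mul_one_div, div_self hqr.ne']

end aux

section main
variable {X Y : Type*} [MeasurableSpace X] [MeasurableSpace Y] {μ : Measure X} {ν : Measure Y}

lemma pointwise_key {p : ℝ} (hp : 0 < p) {g : X → ℂ} {f : Y → ℂ} {c : ℝ≥0}
    (h : ∀ lam : ℝ, 0 < lam → distribFn μ g lam ≤ (c:ℝ≥0∞)^p * distribFn ν f lam)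
    {lam : ℝ} (hlam : 0 < lam) :
    ENNReal.ofReal lam * (distribFn μ g lam) ^ (1/p) ≤
      c * (ENNReal.ofReal lam * (distribFn ν f lam) ^ (1/p)) := by
  calc ENNReal.ofReal lam * (distribFn μ g lam) ^ (1/p)
      ≤ ENNReal.ofReal lam * ((c:ℝ≥0∞)^p * distribFn ν f lam) ^ (1/p) := by
        exact mul_le_mul_right (ENNReal.rpow_le_rpow (h lam hlam) (by positivity)) _
    _ = c * (ENNReal.ofReal lam * (distribFn ν f lam) ^ (1/p)) := by
        rw [ENNReal.mul_rpow_of_nonneg _ _ (by positivity : (0:ℝ) ≤ 1/p),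
          ← ENNReal.rpow_mul, mul_one_div, div_self hp.ne', ENNReal.rpow_one,
          mul_left_comm]

lemma lorentzNorm_le_of_distrib {p : ℝ} (hp : 0 < p) {q : ℝ≥0∞} (hq : 1 ≤ q)
    {g : X → ℂ} {f : Y → ℂ} {c : ℝ≥0}
    (h : ∀ lam : ℝ, 0 < lam → distribFn μ g lam ≤ (c:ℝ≥0∞)^p * distribFn ν f lam) :
    lorentzNorm μ p q g ≤ c * lorentzNorm ν p q f := by
  unfold lorentzNorm
  split_ifs with hqt
  · simp_rw [ENNReal.mul_iSup]
    exact iSup₂_mono fun lam hlam => pointwise_key hp h hlam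
  · have hq1 : (1:ℝ) ≤ q.toReal := by
      rw [← ENNReal.toReal_one]; exact ENNReal.toReal_mono hqt hq
    have hqr : (0:ℝ) < q.toReal := by linarith
    have hI : ∫⁻ lam in Ioi (0:ℝ),
        (ENNReal.ofReal lam * (distribFn μ g lam) ^ (1/p)) ^ q.toReal / ENNReal.ofReal lam
        ≤ (c:ℝ≥0∞)^q.toReal * ∫⁻ lam in Ioi (0:ℝ),
          (ENNReal.ofReal lam * (distribFn ν f lam) ^ (1/p)) ^ q.toReal / ENNReal.ofReal lam := by
      rw [← lintegral_const_mul' _ _ (by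
        exact ENNReal.rpow_ne_top_of_nonneg hqr.le ENNReal.coe_ne_top)]
      refine setLIntegral_mono' measurableSet_Ioi fun lam hlam => ?_
      rw [← mul_div_assoc, ← ENNReal.mul_rpow_of_nonneg _ _ hqr.le]
      exact ENNReal.div_le_div_right
        (ENNReal.rpow_le_rpow (pointwise_key hp h hlam) hqr.le) _
    calc (q * _) ^ (1/q.toReal) ≤ ((c:ℝ≥0∞)^q.toReal * (q * _)) ^ (1/q.toReal) := by
          refine ENNReal.rpow_le_rpow ?_ (by positivity)
          rw [mul_left_comm]
          exact mul_le_mul_right hI q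
      _ = c * (q * _) ^ (1/q.toReal) := by
          rw [ENNReal.mul_rpow_of_nonneg _ _ (by positivity : (0:ℝ) ≤ 1/q.toReal),
            ← ENNReal.rpow_mul, mul_one_div, div_self hqr.ne', ENNReal.rpow_one]

lemma lorentzNorm_top_le {p : ℝ} (hp : 0 < p) {s : ℝ≥0∞} (hs : 1 ≤ s) (hst : s ≠ ∞)
    (f : X → ℂ) : lorentzNorm μ p ∞ f ≤ lorentzNorm μ p s f := by
  have hs1 : (1:ℝ) ≤ s.toReal := by
    rw [← ENNReal.toReal_one]; exact ENNReal.toReal_mono hst hs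
  have hsr : (0:ℝ) < s.toReal := by linarith
  rw [lorentzNorm, if_pos rfl]
  refine iSup₂_le fun lam0 hlam0 => ?_
  rw [mem_Ioi] at hlam0
  set d := distribFn μ f
  have key : (ENNReal.ofReal lam0 * d lam0 ^ (1/p)) ^ s.toReal ≤
      s * ∫⁻ lam in Ioi (0:ℝ),
        (ENNReal.ofReal lam * (d lam) ^ (1/p)) ^ s.toReal / ENNReal.ofReal lam := by
    have e1 : (ENNReal.ofReal lam0 * d lam0 ^ (1/p)) ^ s.toReal
        = ENNReal.ofReal (lam0 ^ s.toReal) * d lam0 ^ ((1/p) * s.toReal) := by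
      rw [ENNReal.mul_rpow_of_nonneg _ _ hsr.le, ← ENNReal.rpow_mul,
        ENNReal.ofReal_rpow_of_pos hlam0]
    have e2 : ∫⁻ lam in Ioo (0:ℝ) lam0,
        d lam0 ^ ((1/p) * s.toReal) * ENNReal.ofReal (lam ^ (s.toReal - 1))
        = d lam0 ^ ((1/p) * s.toReal) * ENNReal.ofReal (lam0 ^ s.toReal / s.toReal) := by
      rw [lintegral_const_mul _
        ((Real.continuous_rpow_const (by linarith : (0:ℝ) ≤ s.toReal - 1)).measurable.ennreal_ofReal),
        lint_rpow _ _ hs1 hlam0]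
    have e3 : ∀ lam ∈ Ioo (0:ℝ) lam0,
        d lam0 ^ ((1/p) * s.toReal) * ENNReal.ofReal (lam ^ (s.toReal - 1)) ≤
        (ENNReal.ofReal lam * (d lam) ^ (1/p)) ^ s.toReal / ENNReal.ofReal lam := by
      intro lam hlam
      rw [ENNReal.mul_rpow_of_nonneg _ _ hsr.le, ← ENNReal.rpow_mul,
        mul_comm ((ENNReal.ofReal lam) ^ s.toReal), mul_div_assoc,
        ofReal_rpow_div _ _ hlam.1]
      gcongr
      exact distribFn_anti f hlam.2.le
    calc (ENNReal.ofReal lam0 * d lam0 ^ (1/p)) ^ s.toReal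
        = s * (d lam0 ^ ((1/p) * s.toReal) * ENNReal.ofReal (lam0 ^ s.toReal / s.toReal)) := by
          have e4 : (s:ℝ≥0∞) * ENNReal.ofReal (lam0 ^ s.toReal / s.toReal)
              = ENNReal.ofReal (lam0 ^ s.toReal) := by
            rw [ENNReal.ofReal_div_of_pos hsr, ENNReal.ofReal_toReal hst,
              ENNReal.mul_div_cancel (by simpa using (lt_of_lt_of_le zero_lt_one hs).ne') hst]
          rw [e1, ← e4]; ring
      _ = s * ∫⁻ lam in Ioo (0:ℝ) lam0,
            d lam0 ^ ((1/p) * s.toReal) * ENNReal.ofReal (lam ^ (s.toReal - 1)) := by rw [e2]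
      _ ≤ s * ∫⁻ lam in Ioo (0:ℝ) lam0,
            (ENNReal.ofReal lam * (d lam) ^ (1/p)) ^ s.toReal / ENNReal.ofReal lam :=
          mul_le_mul_right (setLIntegral_mono' measurableSet_Ioo e3) s
      _ ≤ _ := mul_le_mul_right (lintegral_mono_set Ioo_subset_Ioi_self) s
  have := ENNReal.rpow_le_rpow key (by positivity : (0:ℝ) ≤ 1/s.toReal)
  rw [← ENNReal.rpow_mul, mul_one_div, div_self hsr.ne', ENNReal.rpow_one] at this
  rw [lorentzNorm, if_neg hst]
  exact this

end main

section embed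
variable {X : Type*} [MeasurableSpace X] {μ : Measure X}

lemma lorentzNorm_le_embed {p : ℝ} (hp : 0 < p) {s q : ℝ≥0∞} (hs : 1 ≤ s) (hsq : s ≤ q)
    (f : X → ℂ) :
    lorentzNorm μ p q f ≤ (q/s) ^ (1/q.toReal) * lorentzNorm μ p s f := by
  have hs0 : s ≠ 0 := (lt_of_lt_of_le zero_lt_one hs).ne'
  rcases eq_or_ne q ∞ with rfl | hqt
  · have h1 : ((⊤:ℝ≥0∞)/s) ^ (1/(⊤:ℝ≥0∞).toReal) = 1 := by
      simp
    rw [h1, one_mul]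
    rcases eq_or_ne s ∞ with rfl | hst
    · exact le_rfl
    · exact lorentzNorm_top_le hp hs hst f
  have hst : s ≠ ∞ := fun h => hqt (top_le_iff.1 (h ▸ hsq))
  have hq : (1:ℝ≥0∞) ≤ q := le_trans hs hsq
  have hq1 : (1:ℝ) ≤ q.toReal := by
    rw [← ENNReal.toReal_one]; exact ENNReal.toReal_mono hqt hq
  have hs1 : (1:ℝ) ≤ s.toReal := by
    rw [← ENNReal.toReal_one]; exact ENNReal.toReal_mono hst hs
  have hqr : (0:ℝ) < q.toReal := by linarith
  have hsr : (0:ℝ) < s.toReal := by linarith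
  have hsq' : s.toReal ≤ q.toReal := ENNReal.toReal_mono hqt hsq
  set N := lorentzNorm μ p s f with hN
  rcases eq_or_ne N ∞ with hNt | hNt
  · rw [hNt, ENNReal.mul_top]
    · exact le_top
    · have hqs0 : q/s ≠ 0 := by
        rw [Ne, ENNReal.div_eq_zero_iff]
        push_neg
        exact ⟨(lt_of_lt_of_le zero_lt_one hq).ne', hst⟩
      intro h
      rcases ENNReal.rpow_eq_zero_iff.1 h with ⟨h1, _⟩ | ⟨_, h2⟩
      · exact hqs0 h1
      · linarith [one_div_pos.2 hqr]
  set M := lorentzNorm μ p ∞ f with hM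
  have hMN : M ≤ N := lorentzNorm_top_le hp hs hst f
  have hMt : M ≠ ∞ := fun h => hNt (top_le_iff.1 (h ▸ hMN))
  set d := distribFn μ f
  set Is := ∫⁻ lam in Ioi (0:ℝ),
    (ENNReal.ofReal lam * (d lam) ^ (1/p)) ^ s.toReal / ENNReal.ofReal lam with hIs
  have hNs : N ^ s.toReal = s * Is := by
    rw [hN, lorentzNorm, if_neg hst, ← ENNReal.rpow_mul,
      one_div_mul_cancel hsr.ne', ENNReal.rpow_one]
  -- pointwise bound
  have hpt : ∀ lam ∈ Ioi (0:ℝ),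
      (ENNReal.ofReal lam * (d lam) ^ (1/p)) ^ q.toReal / ENNReal.ofReal lam ≤
      M ^ (q.toReal - s.toReal) *
        ((ENNReal.ofReal lam * (d lam) ^ (1/p)) ^ s.toReal / ENNReal.ofReal lam) := by
    intro lam hlam
    rw [← mul_div_assoc]
    refine ENNReal.div_le_div_right ?_ _
    set x := ENNReal.ofReal lam * (d lam) ^ (1/p) with hx
    have hxM : x ≤ M := by
      rw [hM, lorentzNorm, if_pos rfl]
      exact le_iSup₂ (f := fun lam (_ : lam ∈ Ioi (0:ℝ)) =>
        ENNReal.ofReal lam * (distribFn μ f lam) ^ (1/p)) lam hlam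
    rcases eq_or_ne x 0 with hx0 | hx0
    · rw [hx0, ENNReal.zero_rpow_of_pos hqr]
      exact zero_le
    · have hxt : x ≠ ∞ := fun h => hMt (top_le_iff.1 (h ▸ hxM))
      calc x ^ q.toReal = x ^ (s.toReal + (q.toReal - s.toReal)) := by ring_nf
        _ = x ^ s.toReal * x ^ (q.toReal - s.toReal) := ENNReal.rpow_add _ _ hx0 hxt
        _ ≤ x ^ s.toReal * M ^ (q.toReal - s.toReal) := by
            exact mul_le_mul_right (ENNReal.rpow_le_rpow hxM (by linarith)) _
        _ = M ^ (q.toReal - s.toReal) * x ^ s.toReal := mul_comm _ _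
  have hIq : (∫⁻ lam in Ioi (0:ℝ),
      (ENNReal.ofReal lam * (d lam) ^ (1/p)) ^ q.toReal / ENNReal.ofReal lam)
      ≤ M ^ (q.toReal - s.toReal) * Is := by
    rw [hIs, ← lintegral_const_mul' _ _ (ENNReal.rpow_ne_top_of_nonneg (by linarith) hMt)]
    exact setLIntegral_mono' measurableSet_Ioi hpt
  have hMNpow : M ^ (q.toReal - s.toReal) * N ^ s.toReal ≤ N ^ q.toReal := by
    rcases eq_or_ne N 0 with hN0 | hN0
    · rw [hN0, ENNReal.zero_rpow_of_pos hsr, mul_zero]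
      exact zero_le
    · calc M ^ (q.toReal - s.toReal) * N ^ s.toReal
          ≤ N ^ (q.toReal - s.toReal) * N ^ s.toReal :=
            mul_le_mul_left (ENNReal.rpow_le_rpow hMN (by linarith)) _
        _ = N ^ q.toReal := by
            rw [← ENNReal.rpow_add _ _ hN0 hNt]; ring_nf
  -- main chain
  rw [lorentzNorm, if_neg hqt]
  calc (q * _) ^ (1/q.toReal)
      ≤ ((q/s) * N ^ q.toReal) ^ (1/q.toReal) := by
        refine ENNReal.rpow_le_rpow ?_ (by positivity)
        calc q * _ ≤ q * (M ^ (q.toReal - s.toReal) * Is) := mul_le_mul_right hIq q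
          _ = (q/s) * (M ^ (q.toReal - s.toReal) * (s * Is)) := by
              have hc : (q/s) * s = q := ENNReal.div_mul_cancel hs0 hst
              nth_rewrite 1 [← hc]
              ring
          _ = (q/s) * (M ^ (q.toReal - s.toReal) * N ^ s.toReal) := by rw [hNs]
          _ ≤ (q/s) * N ^ q.toReal := mul_le_mul_right hMNpow _
    _ = (q/s) ^ (1/q.toReal) * N := by
        rw [ENNReal.mul_rpow_of_nonneg _ _ (by positivity : (0:ℝ) ≤ 1/q.toReal),
          ← ENNReal.rpow_mul, mul_one_div, div_self hqr.ne', ENNReal.rpow_one]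

end embed

/-- `f ∘ φ ∈ L_{p,q}(X)` for every `f ∈ L_{p,s}(Y)` with
`‖f ∘ φ‖_{p,q} ≤ K ‖f‖_{p,s}` (`s ≤ q`), for some constant `K < ∞`, if and only if
`μ(φ⁻¹(B)) ≤ K^p ν(B)` for every measurable set `B`. -/
theorem boundedCompositionOperator_samePQ_iff
    {X Y : Type*} [MeasurableSpace X] [MeasurableSpace Y]
    (μ : Measure X) (ν : Measure Y) [SigmaFinite μ] [SigmaFinite ν]
    (φ : X → Y) (hφ : Measurable φ)
    (p : ℝ) (hp : 1 < p)
    (s q : ℝ≥0∞) (hs : 1 ≤ s) (hsq : s ≤ q) :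
    (∃ K : ℝ≥0, (∀ f : Y → ℂ, MemLorentz ν p s f → MemLorentz μ p q (f ∘ φ)) ∧
        ∀ f : Y → ℂ, MemLorentz ν p s f →
          lorentzNorm μ p q (f ∘ φ) ≤ (K : ℝ≥0∞) * lorentzNorm ν p s f) ↔
      (∃ K : ℝ≥0, ∀ B : Set Y, MeasurableSet B →
        μ (φ ⁻¹' B) ≤ (K : ℝ≥0∞) ^ p * ν B) := by
  have hp0 : (0:ℝ) < p := by linarith
  have hq : (1:ℝ≥0∞) ≤ q := le_trans hs hsq
  constructor
  · rintro ⟨K, hmem, hbound⟩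
    refine ⟨max K 1, fun B hB => ?_⟩
    have hK1 : (1:ℝ≥0∞) ≤ (max K 1 : ℝ≥0) := by
      rw [← ENNReal.coe_one, ENNReal.coe_le_coe]
      exact le_max_right _ _
    rcases eq_or_ne (ν B) ∞ with hνB | hνB
    · rw [hνB, ENNReal.mul_top]
      · exact le_top
      · intro h
        have h1 : (1:ℝ≥0∞) ≤ ((max K 1 : ℝ≥0) : ℝ≥0∞) ^ p :=
          ENNReal.one_le_rpow hK1 hp0  -- might not exist, fix below
        rw [h] at h1
        exact (not_le.2 zero_lt_one) h1
    · set f : Y → ℂ := B.indicator fun _ => (1:ℂ) with hf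
      have hfm : MemLorentz ν p s f :=
        ⟨measurable_const.indicator hB,
          by rw [hf, lorentzNorm_indicator hp0 hs]
             exact ENNReal.rpow_lt_top_of_nonneg (by positivity) hνB⟩
      have hcomp : f ∘ φ = (φ ⁻¹' B).indicator fun _ => (1:ℂ) := by
        funext x
        by_cases hx : φ x ∈ B <;>
          simp [hf, Function.comp, indicator_apply, hx, mem_preimage]
      have h1 := hbound f hfm
      rw [hcomp, lorentzNorm_indicator hp0 hq, hf, lorentzNorm_indicator hp0 hs] at h1
      have h2 := ENNReal.rpow_le_rpow h1 hp0.le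
      rw [← ENNReal.rpow_mul, one_div_mul_cancel hp0.ne', ENNReal.rpow_one,
        ENNReal.mul_rpow_of_nonneg _ _ hp0.le, ← ENNReal.rpow_mul,
        one_div_mul_cancel hp0.ne', ENNReal.rpow_one] at h2
      calc μ (φ ⁻¹' B) ≤ (K:ℝ≥0∞) ^ p * ν B := h2
        _ ≤ ((max K 1 : ℝ≥0) : ℝ≥0∞) ^ p * ν B := by
            gcongr
            exact le_max_left _ _
  · rintro ⟨K, hK⟩
    have hCt : (q/s) ^ (1/q.toReal) ≠ ∞ := by
      rcases eq_or_ne q ∞ with rfl | hqt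
      · rw [ENNReal.toReal_top, _root_.div_zero, ENNReal.rpow_zero]
        exact one_ne_top
      · refine ENNReal.rpow_ne_top_of_nonneg (by positivity) ?_
        intro h
        rw [ENNReal.div_eq_top] at h
        rcases h with ⟨_, h2⟩ | ⟨h1, _⟩
        · exact (lt_of_lt_of_le zero_lt_one hs).ne' h2
        · exact hqt h1
    refine ⟨K * ((q/s) ^ (1/q.toReal)).toNNReal, ?_, ?_⟩ <;> intro f hf
    all_goals {
      have hdist : ∀ lam : ℝ, 0 < lam →
          distribFn μ (f ∘ φ) lam ≤ ((K:ℝ≥0∞)) ^ p * distribFn ν f lam := by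
        intro lam _
        have hBm : MeasurableSet {y | lam < ‖f y‖} :=
          measurableSet_lt measurable_const (continuous_norm.measurable.comp hf.1)
        exact hK _ hBm
      have h1 : lorentzNorm μ p q (f ∘ φ) ≤ (K:ℝ≥0∞) * lorentzNorm ν p q f :=
        lorentzNorm_le_of_distrib hp0 hq hdist
      have h2 : lorentzNorm ν p q f ≤ (q/s) ^ (1/q.toReal) * lorentzNorm ν p s f :=
        lorentzNorm_le_embed hp0 hs hsq f
      have h3 : lorentzNorm μ p q (f ∘ φ) ≤
          ((K * ((q/s) ^ (1/q.toReal)).toNNReal : ℝ≥0) : ℝ≥0∞) * lorentzNorm ν p s f := by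
        rw [ENNReal.coe_mul, ENNReal.coe_toNNReal hCt, mul_assoc]
        exact h1.trans (mul_le_mul_right h2 _)
      first
        | exact ⟨hf.1.comp hφ, lt_of_le_of_lt h3
            (ENNReal.mul_lt_top ENNReal.coe_lt_top hf.2)⟩
        | exact h3
    }
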